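/- arXiv:1301.6662 — 6 statements merged into one kernel-verified Lean document; each statement's English description precedes it below -/
import Mathlib

section
/- Let v, ω ∈ ℝ be constants and let β, λβ : [t₀, t₁] → ℝ be differentiable functions satisfying β'(t) = ω − v·sin(β(t)) and λβ'(t) = v·λβ(t)·cos(β(t)) for all t ∈ [t₀, t₁]. Then the function t ↦ λβ(t)·(ω − v·sin(β(t))) is constant on [t₀, t₁]; in particular, if ω − v·sin(β(t)) ≠ 0 for all t, then λβ(t) = K₂ / (ω − v·sin(β(t))) where K₂ = λβ(t₀)·(ω − v·sin(β(t₀))). -/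
open Real Set

/-- Along a regular primitive (constant controls `v, ω`) of the
car-like robot with one trailer, with `β' = ω − v sin β` and
`λβ' = v λβ cos β`, the quantity `λβ · (ω − v sin β)` is constant; in
particular if `ω − v sin β` never vanishes, then
`λβ t = K₂ / (ω − v sin (β t))` with `K₂ = λβ t₀ · (ω − v sin (β t₀))`. -/
theorem stmt2 (t₀ t₁ : ℝ) (ht : t₀ ≤ t₁) (v ω : ℝ) (β lβ : ℝ → ℝ)
    (hβ : ∀ t ∈ Icc t₀ t₁, HasDerivAt β (ω - v * Real.sin (β t)) t)
    (hlβ : ∀ t ∈ Icc t₀ t₁, HasDerivAt lβ (v * lβ t * Real.cos (β t)) t) :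
    (∀ t ∈ Icc t₀ t₁,
      lβ t * (ω - v * Real.sin (β t)) = lβ t₀ * (ω - v * Real.sin (β t₀))) ∧
    ((∀ t ∈ Icc t₀ t₁, ω - v * Real.sin (β t) ≠ 0) →
      ∀ t ∈ Icc t₀ t₁,
        lβ t = lβ t₀ * (ω - v * Real.sin (β t₀)) / (ω - v * Real.sin (β t))) := by
  have key : ∀ t ∈ Icc t₀ t₁,
      lβ t * (ω - v * Real.sin (β t)) = lβ t₀ * (ω - v * Real.sin (β t₀)) := by
    have hderiv : ∀ t ∈ Icc t₀ t₁,
        HasDerivAt (fun s => lβ s * (ω - v * Real.sin (β s))) 0 t := by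
      intro t htmem
      have h1 := hlβ t htmem
      have h2 : HasDerivAt (fun s => ω - v * Real.sin (β s))
          (-(v * (Real.cos (β t) * (ω - v * Real.sin (β t))))) t := by
        have := (((hβ t htmem).sin).const_mul v).const_sub ω
        convert this using 1
        try ring
      have : HasDerivAt (fun s => lβ s * (ω - v * Real.sin (β s))) (v * lβ t * Real.cos (β t) * (ω - v * Real.sin (β t)) + lβ t * -(v * (Real.cos (β t) * (ω - v * Real.sin (β t))))) t := h1.fun_mul h2
      convert this using 1
      try ring
    apply constant_of_has_deriv_right_zero
    · intro t htmem
      exact ((hlβ t htmem).mul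
        (((((hβ t htmem).sin).const_mul v).const_sub ω))).continuousAt.continuousWithinAt
    · intro t htmem
      exact (hderiv t (Ico_subset_Icc_self htmem)).hasDerivWithinAt
  refine ⟨key, fun hne t htmem => ?_⟩
  rw [eq_div_iff (hne t htmem)]
  exact key t htmem
end

section
/- Let v, ω ∈ {−1, 1} and K₁ ∈ ℝ, and define f(t) = 2·(v/ω)·arctan((t − 2v + K₁)/(t + K₁)) for t ≠ −K₁. Then f is differentiable on its domain and satisfies f'(t) = ω − v·sin(f(t)) for all t ≠ −K₁. -/
open Real

lemma sin_two_arctan' (u : ℝ) : Real.sin (2 * Real.arctan u) = 2 * u / (1 + u ^ 2) := by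
  have h0 : (0:ℝ) < 1 + u ^ 2 := by positivity
  have hsq : Real.sqrt (1 + u ^ 2) ≠ 0 := by positivity
  rw [Real.sin_two_mul, Real.sin_arctan, Real.cos_arctan]
  field_simp
  rw [Real.sq_sqrt h0.le]

lemma sin_two_c_arctan (c u : ℝ) (hc : c = -1 ∨ c = 1) :
    Real.sin (2 * c * Real.arctan u) = 2 * c * u / (1 + u ^ 2) := by
  rcases hc with rfl | rfl
  · rw [show 2 * (-1:ℝ) * Real.arctan u = -(2 * Real.arctan u) by ring, Real.sin_neg,
      sin_two_arctan']
    ring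
  · rw [show 2 * (1:ℝ) * Real.arctan u = 2 * Real.arctan u by ring, sin_two_arctan']
    ring

/-- The closed form
`f t = 2 (v/ω) arctan ((t − 2v + K₁)/(t + K₁))` solves the trailer-angle ODE
`f' = ω − v sin f` for constant controls `v, ω ∈ {−1, 1}`, on its domain
`t ≠ −K₁`. -/
theorem stmt3 (v ω K₁ : ℝ) (hv : v = -1 ∨ v = 1) (hω : ω = -1 ∨ ω = 1)
    (f : ℝ → ℝ)
    (hf : ∀ t : ℝ, t ≠ -K₁ →
      f t = 2 * (v / ω) * Real.arctan ((t - 2 * v + K₁) / (t + K₁))) :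
    ∀ t : ℝ, t ≠ -K₁ → HasDerivAt f (ω - v * Real.sin (f t)) t := by
  intro t ht
  have hs : t + K₁ ≠ 0 := fun h => ht (by linarith)
  set u : ℝ := (t - 2 * v + K₁) / (t + K₁) with hu
  have h1 : HasDerivAt (fun x => (x - 2 * v + K₁) / (x + K₁))
      ((1 * (t + K₁) - (t - 2 * v + K₁) * 1) / (t + K₁) ^ 2) t :=
    (((hasDerivAt_id t).sub_const _).add_const _).div ((hasDerivAt_id t).add_const _) hs
  have h2 : HasDerivAt (fun x => 2 * (v / ω) * Real.arctan ((x - 2 * v + K₁) / (x + K₁)))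
      (2 * (v / ω) * (1 / (1 + u ^ 2) *
        ((1 * (t + K₁) - (t - 2 * v + K₁) * 1) / (t + K₁) ^ 2))) t :=
    ((Real.hasDerivAt_arctan u).comp t h1).const_mul _
  have heq : (fun x => 2 * (v / ω) * Real.arctan ((x - 2 * v + K₁) / (x + K₁))) =ᶠ[nhds t] f := by
    have hopen : IsOpen {x : ℝ | x ≠ -K₁} := isOpen_ne
    filter_upwards [hopen.mem_nhds ht] with x hx
    exact (hf x hx).symm
  have h3 := h2.congr_of_eventuallyEq heq.symm
  refine h3.congr_deriv (Eq.symm ?_)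
  rw [hf t ht]
  have hc : v / ω = -1 ∨ v / ω = 1 := by
    rcases hv with rfl | rfl <;> rcases hω with rfl | rfl <;> norm_num
  rw [show 2 * (v / ω) * Real.arctan u = 2 * (v / ω) * Real.arctan u from rfl,
    sin_two_c_arctan (v / ω) u hc, hu]
  rcases hv with rfl | rfl <;> rcases hω with rfl | rfl <;> field_simp <;> ring
end

section
/- Let c₁, c₂ ∈ ℝ and let θ, β, λβ : [t₀, t₁] → ℝ be differentiable functions and v, ω : [t₀, t₁] → ℝ functions satisfying θ'(t) = ω(t), β'(t) = ω(t) − v(t)·sin(β(t)), and λβ'(t) = v(t)·λβ(t)·cos(β(t)) for all t ∈ [t₀, t₁]. If c₁·sin(θ(t)) − c₂·cos(θ(t)) + λβ(t)·cos(β(t)) = 0 for all t ∈ [t₀, t₁], then the switching function φv(t) = c₁·cos(θ(t)) + c₂·sin(θ(t)) − λβ(t)·sin(β(t)) is constant on [t₀, t₁]. -/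
open Real Set

/-- Along a `φω`-singular primitive of the car-like robot with
one trailer, the switching function `φv = c₁ cos θ + c₂ sin θ − λβ sin β`
is constant. -/
theorem stmt8 (t₀ t₁ : ℝ) (c₁ c₂ : ℝ) (θ β lβ v ω : ℝ → ℝ)
    (hθ : ∀ t ∈ Icc t₀ t₁, HasDerivAt θ (ω t) t)
    (hβ : ∀ t ∈ Icc t₀ t₁, HasDerivAt β (ω t - v t * Real.sin (β t)) t)
    (hlβ : ∀ t ∈ Icc t₀ t₁, HasDerivAt lβ (v t * lβ t * Real.cos (β t)) t)
    (hid : ∀ t ∈ Icc t₀ t₁,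
      c₁ * Real.sin (θ t) - c₂ * Real.cos (θ t) + lβ t * Real.cos (β t) = 0) :
    ∀ t ∈ Icc t₀ t₁, ∀ s ∈ Icc t₀ t₁,
      c₁ * Real.cos (θ t) + c₂ * Real.sin (θ t) - lβ t * Real.sin (β t)
        = c₁ * Real.cos (θ s) + c₂ * Real.sin (θ s) - lβ s * Real.sin (β s) := by
  set g : ℝ → ℝ := fun t =>
    c₁ * Real.cos (θ t) + c₂ * Real.sin (θ t) - lβ t * Real.sin (β t) with hg
  have hd : ∀ t ∈ Icc t₀ t₁, HasDerivAt g 0 t := by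
    intro t ht
    have h1 : HasDerivAt g
        (c₁ * (-Real.sin (θ t) * ω t) + c₂ * (Real.cos (θ t) * ω t)
          - (v t * lβ t * Real.cos (β t) * Real.sin (β t)
            + lβ t * (Real.cos (β t) * (ω t - v t * Real.sin (β t))))) t := by
      exact (((hθ t ht).cos.const_mul c₁).add ((hθ t ht).sin.const_mul c₂)).sub
        ((hlβ t ht).mul ((hβ t ht).sin))
    have key := hid t ht
    have : (c₁ * (-Real.sin (θ t) * ω t) + c₂ * (Real.cos (θ t) * ω t)
          - (v t * lβ t * Real.cos (β t) * Real.sin (β t)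
            + lβ t * (Real.cos (β t) * (ω t - v t * Real.sin (β t))))) = 0 := by
      linear_combination (-(ω t)) * key
    rwa [this] at h1
  have hcont : ContinuousOn g (Icc t₀ t₁) := fun t ht => (hd t ht).continuousAt.continuousWithinAt
  have hc : ∀ x ∈ Icc t₀ t₁, g x = g t₀ :=
    constant_of_has_deriv_right_zero hcont fun x hx =>
      ((hd x (mem_Icc_of_Ico hx)).hasDerivWithinAt)
  intro t ht s hs
  show g t = g s
  rw [hc t ht, hc s hs]
end

section
/- Let φv ≠ 0 be a real constant, let v : [t₀, t₁] → ℝ satisfy v(t)² = 1 for all t, and let β, λθ : [t₀, t₁] → ℝ be differentiable functions and ω : [t₀, t₁] → ℝ a function satisfying λθ'(t) = v(t)·λθ(t)·cos(β(t)), β'(t) = ω(t) − v(t)·sin(β(t)), and ω(t) = v(t)·λθ(t)/φv for all t ∈ [t₀, t₁]. Then the function t ↦ λθ(t)² − 2·φv·λθ(t)·sin(β(t)) is constant on [t₀, t₁]; equivalently, λθ(t₀)² − λθ(t)² = 2·φv·(λθ(t₀)·sin(β(t₀)) − λθ(t)·sin(β(t))) for all t ∈ [t₀, t₁]. -/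
open Real Set

/-- Along a `φω`-singular primitive (`λβ = −λθ`, `v² = 1`,
`ω = v λθ / φv`, `β' = ω − v sin β`, `λθ' = v λθ cos β`), the quantity
`λθ² − 2 φv λθ sin β` is conserved. -/
theorem stmt9 (t₀ t₁ : ℝ) (ht : t₀ ≤ t₁) (φv : ℝ) (hφv : φv ≠ 0)
    (v ω β lθ : ℝ → ℝ) (hv : ∀ t ∈ Icc t₀ t₁, (v t) ^ 2 = 1)
    (hlθ : ∀ t ∈ Icc t₀ t₁, HasDerivAt lθ (v t * lθ t * Real.cos (β t)) t)
    (hβ : ∀ t ∈ Icc t₀ t₁, HasDerivAt β (ω t - v t * Real.sin (β t)) t)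
    (hω : ∀ t ∈ Icc t₀ t₁, ω t = v t * lθ t / φv) :
    ∀ t ∈ Icc t₀ t₁,
      (lθ t₀) ^ 2 - (lθ t) ^ 2
        = 2 * φv * (lθ t₀ * Real.sin (β t₀) - lθ t * Real.sin (β t)) := by
  set f : ℝ → ℝ := fun t => lθ t ^ 2 - 2 * φv * (lθ t * Real.sin (β t)) with hf
  have hderiv : ∀ t ∈ Icc t₀ t₁, HasDerivAt f 0 t := by
    intro t ht'
    have h1 := hlθ t ht'
    have h2 := hβ t ht'
    rw [hω t ht'] at h2
    have h3 := (h1.pow 2).sub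
      ((h1.mul ((Real.hasDerivAt_sin (β t)).comp t h2)).const_mul (2 * φv))
    convert h3 using 1
    · rfl
    · rfl
    · rfl
    simp only [Function.comp_apply]
    field_simp
    ring
  have hcont : ContinuousOn f (Icc t₀ t₁) := fun x hx =>
    (hderiv x hx).continuousAt.continuousWithinAt
  have key : ∀ t ∈ Icc t₀ t₁, f t = f t₀ :=
    constant_of_has_deriv_right_zero hcont
      (fun x hx => (hderiv x (Ico_subset_Icc_self hx)).hasDerivWithinAt)
  intro t ht'
  have h := key t ht'
  simp only [hf] at h
  nlinarith [h]
end

section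
/- Let φv ≠ 0 be a real constant, let v : [t₀, t₁] → ℝ satisfy v(t)² = 1 for all t, and let β, λθ : [t₀, t₁] → ℝ be differentiable functions and ω : [t₀, t₁] → ℝ a function satisfying λθ'(t) = v(t)·λθ(t)·cos(β(t)), β'(t) = ω(t) − v(t)·sin(β(t)), and ω(t) = v(t)·λθ(t)/φv for all t ∈ [t₀, t₁]. Then for every t ∈ [t₀, t₁], λθ(t) = φv·sin(β(t)) + ε(t)·√(λθ(t₀)² − 2·φv·λθ(t₀)·sin(β(t₀)) + φv²·sin²(β(t))) for some ε(t) ∈ {−1, 1}; equivalently, (λθ(t) − φv·sin(β(t)))² = λθ(t₀)² − 2·φv·λθ(t₀)·sin(β(t₀)) + φv²·sin²(β(t)). -/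
open Real Set

/-- Lemma 1 of the paper: Along a `φω`-singular primitive,
`λθ t = φv sin β t ± √(λθ t₀² − 2 φv λθ t₀ sin β t₀ + φv² sin² β t)`;
equivalently `(λθ t − φv sin β t)² = λθ t₀² − 2 φv λθ t₀ sin β t₀ + φv² sin² β t`. -/
theorem stmt10 (t₀ t₁ : ℝ) (ht : t₀ ≤ t₁) (φv : ℝ) (hφv : φv ≠ 0)
    (v ω β lθ : ℝ → ℝ) (hv : ∀ t ∈ Icc t₀ t₁, (v t) ^ 2 = 1)
    (hlθ : ∀ t ∈ Icc t₀ t₁, HasDerivAt lθ (v t * lθ t * Real.cos (β t)) t)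
    (hβ : ∀ t ∈ Icc t₀ t₁, HasDerivAt β (ω t - v t * Real.sin (β t)) t)
    (hω : ∀ t ∈ Icc t₀ t₁, ω t = v t * lθ t / φv) :
    ∀ t ∈ Icc t₀ t₁,
      (lθ t - φv * Real.sin (β t)) ^ 2
        = (lθ t₀) ^ 2 - 2 * φv * lθ t₀ * Real.sin (β t₀)
          + φv ^ 2 * (Real.sin (β t)) ^ 2 ∧
      ∃ ε : ℝ, (ε = -1 ∨ ε = 1) ∧
        lθ t = φv * Real.sin (β t)
          + ε * Real.sqrt ((lθ t₀) ^ 2 - 2 * φv * lθ t₀ * Real.sin (β t₀)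
            + φv ^ 2 * (Real.sin (β t)) ^ 2) := by
  set F : ℝ → ℝ := fun t => lθ t ^ 2 - 2 * φv * lθ t * Real.sin (β t) with hF
  have hFderiv : ∀ t ∈ Icc t₀ t₁, HasDerivAt F 0 t := by
    intro t htmem
    have h1 := hlθ t htmem
    have h2 := hβ t htmem
    have hsin : HasDerivAt (fun s => Real.sin (β s))
        (Real.cos (β t) * (ω t - v t * Real.sin (β t))) t :=
      (Real.hasDerivAt_sin (β t)).comp t h2
    have h3 : HasDerivAt F
        (2 * lθ t ^ 1 * (v t * lθ t * Real.cos (β t)) -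
          (2 * φv * (v t * lθ t * Real.cos (β t)) * Real.sin (β t) +
            2 * φv * lθ t * (Real.cos (β t) * (ω t - v t * Real.sin (β t))))) t := by
      exact (h1.pow 2).sub (((h1.const_mul (2 * φv)).mul hsin))
    convert h3 using 1
    rw [hω t htmem]
    field_simp
    ring
  have hFconst : ∀ t ∈ Icc t₀ t₁, F t = F t₀ := by
    apply constant_of_has_deriv_right_zero
    · intro x hx
      exact ((hFderiv x hx).differentiableAt.continuousAt).continuousWithinAt
    · intro x hx
      exact (hFderiv x (Ico_subset_Icc_self hx)).hasDerivWithinAt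
  intro t htmem
  have key : (lθ t - φv * Real.sin (β t)) ^ 2
      = (lθ t₀) ^ 2 - 2 * φv * lθ t₀ * Real.sin (β t₀)
        + φv ^ 2 * (Real.sin (β t)) ^ 2 := by
    have := hFconst t htmem
    simp only [hF] at this
    nlinarith [this]
  refine ⟨key, ?_⟩
  set a := lθ t - φv * Real.sin (β t) with ha
  refine ⟨if 0 ≤ a then 1 else -1, by by_cases h : 0 ≤ a <;> simp [h], ?_⟩
  rw [← key, Real.sqrt_sq_eq_abs]
  by_cases h : 0 ≤ a
  · rw [if_pos h, abs_of_nonneg h, ha]; ring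
  · simp only [h, if_false]
    rw [abs_of_neg (lt_of_not_ge h)]
    simp [ha]
end

section
/- Let φv ≠ 0 be a real constant, let v : [t₀, t₁] → ℝ satisfy v(t)² = 1 for all t, and let β, λθ : [t₀, t₁] → ℝ be differentiable functions and ω : [t₀, t₁] → ℝ a function satisfying λθ'(t) = v(t)·λθ(t)·cos(β(t)), β'(t) = ω(t) − v(t)·sin(β(t)), and ω(t) = v(t)·λθ(t)/φv for all t ∈ [t₀, t₁]. If there exists t* ∈ [t₀, t₁] with λθ(t*) = 0, then either λθ(t₀) = 0 or λθ(t₀) = 2·φv·sin(β(t₀)). -/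
open Real Set

/-- If a `φω`-singular primitive reaches the line `λθ = 0` at
some time `t*`, then either `λθ t₀ = 0` or `λθ t₀ = 2 φv sin β t₀`. -/
theorem stmt11 (t₀ t₁ : ℝ) (ht : t₀ ≤ t₁) (φv : ℝ) (hφv : φv ≠ 0)
    (v ω β lθ : ℝ → ℝ) (hv : ∀ t ∈ Icc t₀ t₁, (v t) ^ 2 = 1)
    (hlθ : ∀ t ∈ Icc t₀ t₁, HasDerivAt lθ (v t * lθ t * Real.cos (β t)) t)
    (hβ : ∀ t ∈ Icc t₀ t₁, HasDerivAt β (ω t - v t * Real.sin (β t)) t)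
    (hω : ∀ t ∈ Icc t₀ t₁, ω t = v t * lθ t / φv)
    (hstar : ∃ tstar ∈ Icc t₀ t₁, lθ tstar = 0) :
    lθ t₀ = 0 ∨ lθ t₀ = 2 * φv * Real.sin (β t₀) := by
  set E : ℝ → ℝ := fun t => lθ t ^ 2 - 2 * φv * lθ t * Real.sin (β t) with hE
  have hEderiv : ∀ t ∈ Icc t₀ t₁, HasDerivAt E 0 t := by
    intro t htI
    have h1 := hlθ t htI
    have h2 := hβ t htI
    have hD : HasDerivAt E
        (2 * lθ t * (v t * lθ t * Real.cos (β t)) -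
          2 * φv * ((v t * lθ t * Real.cos (β t)) * Real.sin (β t) +
            lθ t * (Real.cos (β t) * (ω t - v t * Real.sin (β t))))) t := by
      have hs : HasDerivAt (fun t => Real.sin (β t))
          (Real.cos (β t) * (ω t - v t * Real.sin (β t))) t :=
        (Real.hasDerivAt_sin (β t)).comp t h2
      have := ((h1.pow 2).sub (((h1.mul hs).const_mul (2 * φv))))
      convert this using 1
      · rfl
      · rfl
      · funext x; simp only [hE, Pi.sub_apply, Pi.pow_apply, Pi.mul_apply]; ring
      · push_cast; ring
    convert hD using 1
    rw [hω t htI]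
    field_simp
    ring
  have hEconst : ∀ t ∈ Icc t₀ t₁, E t = E t₀ := by
    intro t htI
    have hcont : ContinuousOn E (Icc t₀ t₁) := fun x hx =>
      (hEderiv x hx).continuousAt.continuousWithinAt
    exact constant_of_has_deriv_right_zero hcont
      (fun x hx => (hEderiv x (Ico_subset_Icc_self hx)).hasDerivWithinAt) t htI
  obtain ⟨ts, hts, hts0⟩ := hstar
  have h0 : E t₀ = 0 := by
    rw [← hEconst ts hts]
    simp [hE, hts0]
  have : lθ t₀ * (lθ t₀ - 2 * φv * Real.sin (β t₀)) = 0 := by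
    have := h0; simp only [hE] at this; nlinarith [this]
  rcases mul_eq_zero.mp this with h | h
  · exact Or.inl h
  · exact Or.inr (by linarith)
end
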